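/- Let A be an associative algebra with derivations d, d̄ : A → Ω¹. Suppose φ₀ ∈ A solves d̄φ₀ - (dφ₀)·φ₀ + [γ, φ₀] = 0 for some γ ∈ Ω¹, and Φ ∈ A is invertible and solves the linear equation d̄Φ - (dΦ)·φ₀ - Φ·γ = 0. Then φ := Φ·φ₀·Φ⁻¹ solves the Riemann equation d̄φ - (dφ)·φ = 0. -/
import Mathlib


open MulOpposite in
/-- Linearization method (abstract Cole-Hopf transformation).  If
`φ₀` solves `d̄φ₀ - (dφ₀)·φ₀ + [γ,φ₀] = 0` and the invertible `Φ` solves the linear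
equation `d̄Φ - (dΦ)·φ₀ - Φ·γ = 0`, then `φ := Φ·φ₀·Φ⁻¹` solves the Riemann equation
`d̄φ - (dφ)·φ = 0`. -/
theorem stmt_2 {A Ω : Type*} [Ring A] [AddCommGroup Ω]
    [Module A Ω] [Module Aᵐᵒᵖ Ω] [SMulCommClass A Aᵐᵒᵖ Ω]
    (d dbar : A → Ω)
    (hd_add : ∀ a b : A, d (a + b) = d a + d b)
    (hdbar_add : ∀ a b : A, dbar (a + b) = dbar a + dbar b)
    (hd_leib : ∀ a b : A, d (a * b) = MulOpposite.op b • d a + a • d b)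
    (hdbar_leib : ∀ a b : A, dbar (a * b) = MulOpposite.op b • dbar a + a • dbar b)
    (φ₀ Φ Ψ : A) (γ : Ω)
    (hPhiInv₁ : Φ * Ψ = 1) (hPhiInv₂ : Ψ * Φ = 1)
    (hφ₀ : dbar φ₀ - MulOpposite.op φ₀ • d φ₀ + (MulOpposite.op φ₀ • γ - φ₀ • γ) = 0)
    (hPhi : dbar Φ - MulOpposite.op φ₀ • d Φ - Φ • γ = 0) :
    dbar (Φ * φ₀ * Ψ) - MulOpposite.op (Φ * φ₀ * Ψ) • d (Φ * φ₀ * Ψ) = 0 := by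
  have hd1 : d 1 = 0 := by
    have h := hd_leib 1 1
    simp at h
    exact h
  have hdbar1 : dbar 1 = 0 := by
    have h := hdbar_leib 1 1
    simp at h
    exact h
  have hdΨ : d Ψ = -(Ψ • op Ψ • d Φ) := by
    have h := hd_leib Φ Ψ
    rw [hPhiInv₁, hd1] at h
    have h2 := congrArg (Ψ • ·) h.symm
    simp only [smul_add, smul_smul, hPhiInv₂, one_smul, smul_zero] at h2
    linear_combination (norm := abel) h2
  have hdbΨ : dbar Ψ = -(Ψ • op Ψ • dbar Φ) := by
    have h := hdbar_leib Φ Ψ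
    rw [hPhiInv₁, hdbar1] at h
    have h2 := congrArg (Ψ • ·) h.symm
    simp only [smul_add, smul_smul, hPhiInv₂, one_smul, smul_zero] at h2
    linear_combination (norm := abel) h2
  have hdbP : dbar Φ = op φ₀ • d Φ + Φ • γ := by
    rw [← sub_eq_zero, ← hPhi]; abel
  have hdbp : dbar φ₀ = op φ₀ • d φ₀ - op φ₀ • γ + φ₀ • γ := by
    rw [← sub_eq_zero, ← hφ₀]; abel
  have hsc : ∀ (a : A) (b : Aᵐᵒᵖ) (x : Ω), b • a • x = a • b • x :=
    fun a b x => (smul_comm a b x).symm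
  have hc1 : ∀ a : A, Ψ * (Φ * a) = a := fun a => by rw [← mul_assoc, hPhiInv₂, one_mul]
  have hc2 : ∀ a : A, Φ * (Ψ * a) = a := fun a => by rw [← mul_assoc, hPhiInv₁, one_mul]
  simp only [hd_leib, hdbar_leib, hdΨ, hdbΨ, hdbP, hdbp]
  simp only [smul_add, smul_sub, smul_neg, hsc, smul_smul, ← op_mul,
    mul_assoc, hPhiInv₁, hPhiInv₂, hc1, hc2, mul_one, one_mul, one_smul, op_one]
  abel
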